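/- In the Setup, let u ∈ U_0 and suppose σ_0, σ_1, …, σ_d ∈ 𝕂 satisfy Lⁱ Rⁱ u = σ_i u for 0 ≤ i ≤ d. Then E*_0 E_0 u = P(q⁻¹(q − q⁻¹)⁻²) u, where P(z) = ∑_{i=0}^{d} (−1)ⁱ σ_i qⁱ zⁱ / ([i]_q!)². -/

import Mathlib

noncomputable section

/-- `[n]_q = (qⁿ − q⁻ⁿ)/(q − q⁻¹)`. -/
def qInt {K : Type*} [Field K] (q : K) (n : ℕ) : K :=
  (q ^ n - q⁻¹ ^ n) / (q - q⁻¹)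

/-- `[n]_q! = [n]_q [n−1]_q ⋯ [1]_q`. -/
def qFac {K : Type*} [Field K] (q : K) (n : ℕ) : K :=
  ∏ k ∈ Finset.range n, qInt q (k + 1)

/-- `X, Y` satisfy the cubic `q`-Serre relations. -/
def QSerre {K V : Type*} [Field K] [AddCommGroup V] [Module K V]
    (q : K) (X Y : Module.End K V) : Prop :=
  X ^ 3 * Y - qInt q 3 • (X ^ 2 * Y * X) + qInt q 3 • (X * Y * X ^ 2) - Y * X ^ 3 = 0 ∧
  Y ^ 3 * X - qInt q 3 • (Y ^ 2 * X * Y) + qInt q 3 • (Y * X * Y ^ 2) - X * Y ^ 3 = 0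

/-- `U 0, …, U d` is a decomposition of `V` with diameter `d`: the `U i` with `i ≤ d` are nonzero,
`U i = 0` for `i > d`, and `V` is the (internal) direct sum of the `U i`. -/
def IsDecomposition {K V : Type*} [Field K] [AddCommGroup V] [Module K V]
    (d : ℕ) (U : ℕ → Submodule K V) : Prop :=
  (∀ i, i ≤ d → U i ≠ ⊥) ∧ (∀ i, d < i → U i = ⊥) ∧
  (⨆ i, U i) = ⊤ ∧
  ∀ i, Disjoint (U i) (⨆ j, ⨆ _ : j ≠ i, U j)

/-- The Setup: `U 0, …, U d` is a decomposition of `V`; `R` is a raising map, `L` a lowering map,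
and `A` (resp. `As`) acts on `U i` as `R + q^{2i−d}` (resp. `L + q^{d−2i}`). -/
def TDSetup {K V : Type*} [Field K] [AddCommGroup V] [Module K V]
    (q : K) (d : ℕ) (U : ℕ → Submodule K V) (R L A As : Module.End K V) : Prop :=
  IsDecomposition d U ∧
  (∀ i, Submodule.map R (U i) ≤ U (i + 1)) ∧
  (∀ i, Submodule.map L (U (i + 1)) ≤ U i) ∧
  (∀ u ∈ U 0, L u = 0) ∧
  (∀ i, ∀ u ∈ U i, A u = R u + q ^ (2 * (i : ℤ) - d) • u) ∧
  (∀ i, ∀ u ∈ U i, As u = L u + q ^ ((d : ℤ) - 2 * (i : ℤ)) • u)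

/-- `E i` is, for each `i`, the projection onto `P i` determined by the decomposition of `V` into
the subspaces `P j`: it is the identity on `P i` and zero on each `P j` with `j ≠ i`. -/
def IsProjFamily {K V : Type*} [Field K] [AddCommGroup V] [Module K V]
    (P : ℕ → Submodule K V) (E : ℕ → Module.End K V) : Prop :=
  ∀ i, (∀ v ∈ P i, E i v = v) ∧ ∀ j, j ≠ i → ∀ v ∈ P j, E i v = 0

lemma eigvec_aux {K V : Type*} [Field K] [AddCommGroup V] [Module K V]
    (B N : Module.End K V) (φ : ℕ → K) (x : V) (M : ℕ)
    (hrel : ∀ m, m ≤ M → B ((N ^ m) x) = (N ^ (m+1)) x + φ m • (N ^ m) x)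
    (htop : (N ^ (M+1)) x = 0)
    (hne : ∀ m, 1 ≤ m → m ≤ M → φ 0 - φ m ≠ 0) :
    B (∑ m ∈ Finset.range (M+1), (∏ k ∈ Finset.range m, (φ 0 - φ (k+1))⁻¹) • (N ^ m) x)
      = φ 0 • ∑ m ∈ Finset.range (M+1), (∏ k ∈ Finset.range m, (φ 0 - φ (k+1))⁻¹) • (N ^ m) x := by
  set c : ℕ → K := fun m => ∏ k ∈ Finset.range m, (φ 0 - φ (k+1))⁻¹ with hc
  rw [map_sum, Finset.smul_sum]
  have h1 : ∀ m ∈ Finset.range (M+1), B (c m • (N^m) x)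
      = c m • (N^(m+1)) x + (c m * φ m) • (N^m) x := by
    intro m hm
    rw [map_smul, hrel m (by simpa using Nat.lt_succ_iff.mp (Finset.mem_range.mp hm)),
      smul_add, smul_smul]
  rw [Finset.sum_congr rfl h1, Finset.sum_add_distrib]
  have h2 : ∑ m ∈ Finset.range (M+1), c m • (N^(m+1)) x
      = ∑ m ∈ Finset.range (M+1), ((φ 0 - φ m) * c m) • (N^m) x := by
    rw [Finset.sum_range_succ, htop, smul_zero, add_zero, Finset.sum_range_succ']
    simp only [sub_self, zero_mul, zero_smul, add_zero]
    apply Finset.sum_congr rfl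
    intro m hm
    congr 1
    have hmM : m + 1 ≤ M := Finset.mem_range.mp hm
    have hstep : c (m+1) = c m * (φ 0 - φ (m+1))⁻¹ := Finset.prod_range_succ _ _
    rw [hstep, ← mul_assoc, mul_comm (φ 0 - φ (m+1)) (c m), mul_assoc,
      mul_inv_cancel₀ (hne (m+1) (by omega) hmM), mul_one]
  rw [h2, ← Finset.sum_add_distrib]
  apply Finset.sum_congr rfl
  intro m hm
  rw [smul_smul, ← add_smul]
  congr 1
  ring

lemma key_k {K : Type*} [Field K] (q : K) (hq : q ≠ 0) (hq2 : q - q⁻¹ ≠ 0) (d n : ℕ) :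
    (q ^ (2 * ((0:ℕ):ℤ) - d) - q ^ (2 * (n:ℤ) - d)) *
      (q ^ ((d:ℤ) - 2 * ((0:ℕ):ℤ)) - q ^ ((d:ℤ) - 2 * (n:ℤ))) =
    -(qInt q n) ^ 2 * (q - q⁻¹) ^ 2 := by
  have hA : q ^ (n:ℕ) ≠ 0 := pow_ne_zero _ hq
  have hB : q ^ (d:ℕ) ≠ 0 := pow_ne_zero _ hq
  have e1 : q ^ (2 * ((0:ℕ):ℤ) - d) = (q ^ (d:ℕ))⁻¹ := by
    rw [show 2 * ((0:ℕ):ℤ) - d = -(d:ℤ) by push_cast; ring, zpow_neg, zpow_natCast]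
  have e2 : q ^ (2 * (n:ℤ) - d) = (q ^ (n:ℕ))^2 / q ^ (d:ℕ) := by
    rw [zpow_sub₀ hq, show 2 * (n:ℤ) = ((n * 2 : ℕ) : ℤ) by push_cast; ring,
      zpow_natCast, zpow_natCast, pow_mul]
  have e3 : q ^ ((d:ℤ) - 2 * ((0:ℕ):ℤ)) = q ^ (d:ℕ) := by
    rw [show (d:ℤ) - 2 * ((0:ℕ):ℤ) = (d:ℤ) by push_cast; ring, zpow_natCast]
  have e4 : q ^ ((d:ℤ) - 2 * (n:ℤ)) = q ^ (d:ℕ) / (q ^ (n:ℕ))^2 := by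
    rw [zpow_sub₀ hq, show 2 * (n:ℤ) = ((n * 2 : ℕ) : ℤ) by push_cast; ring,
      zpow_natCast, zpow_natCast, pow_mul]
  have e5 : (qInt q n) ^ 2 * (q - q⁻¹) ^ 2 = (q ^ (n:ℕ) - (q ^ (n:ℕ))⁻¹) ^ 2 := by
    rw [qInt, inv_pow, div_pow, div_mul_cancel₀ _ (pow_ne_zero 2 hq2)]
  rw [e1, e2, e3, e4, neg_mul, e5]
  field_simp
  ring

/-- Theorem 8.1: for `u ∈ U 0` with `Lⁱ Rⁱ u = σ_i u` (`0 ≤ i ≤ d`), one has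
`E*₀ E₀ u = P(q⁻¹(q − q⁻¹)⁻²) u` where `P(z) = ∑ (−1)ⁱ σ_i qⁱ zⁱ / ([i]_q!)²`. -/
theorem statement8 {K : Type*} [Field K] [IsAlgClosed K] [CharZero K]
    (q : K) (hq : q ≠ 0) (hq1 : ∀ n : ℕ, 0 < n → q ^ n ≠ 1)
    {V : Type*} [AddCommGroup V] [Module K V] [FiniteDimensional K V]
    (d : ℕ) (U : ℕ → Submodule K V) (R L A As : Module.End K V)
    (hsetup : TDSetup q d U R L A As)
    (E Es : ℕ → Module.End K V)
    (hE : IsProjFamily (fun i => Module.End.eigenspace A (q ^ (2 * (i : ℤ) - d))) E)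
    (hEs : IsProjFamily (fun i => Module.End.eigenspace As (q ^ ((d : ℤ) - 2 * (i : ℤ)))) Es)
    (u : V) (hu : u ∈ U 0)
    (σ : ℕ → K) (hσ : ∀ i, i ≤ d → (L ^ i * R ^ i) u = σ i • u) :
    Es 0 (E 0 u) =
      (∑ i ∈ Finset.range (d + 1),
        (-1 : K) ^ i * σ i * q ^ i * (q⁻¹ * ((q - q⁻¹) ^ 2)⁻¹) ^ i / (qFac q i) ^ 2) • u := by
  obtain ⟨⟨-, hUbot, hUsup, -⟩, hR, hL, hL0, hA, hAs⟩ := hsetup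
  -- basic nonvanishing facts
  have hz1 : ∀ m : ℤ, m ≠ 0 → q ^ m ≠ 1 := by
    intro m hm h
    have hpos : 0 < m.natAbs := Int.natAbs_pos.mpr hm
    refine hq1 m.natAbs hpos ?_
    rcases Int.natAbs_eq m with he | he
    · rw [← zpow_natCast, ← he, h]
    · rw [← zpow_natCast, show ((m.natAbs : ℤ)) = -m by omega, zpow_neg, h, inv_one]
  have hzne : ∀ a b : ℤ, a ≠ b → q ^ a - q ^ b ≠ 0 := by
    intro a b hab
    refine sub_ne_zero_of_ne fun h => hz1 (a - b) (by omega) ?_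
    rw [zpow_sub₀ hq, h, div_self (zpow_ne_zero b hq)]
  have hq2 : q - q⁻¹ ≠ 0 := by
    have := hzne 1 (-1) (by omega)
    simpa using this
  have hqInt_ne : ∀ k : ℕ, 1 ≤ k → qInt q k ≠ 0 := by
    intro k hk
    have hnum : q ^ (k:ℕ) - q⁻¹ ^ (k:ℕ) ≠ 0 := by
      have := hzne (k:ℤ) (-(k:ℤ)) (by omega)
      simpa [zpow_neg, zpow_natCast, inv_pow] using this
    exact div_ne_zero hnum hq2
  have hqFac_ne : ∀ m : ℕ, qFac q m ≠ 0 := by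
    intro m
    exact Finset.prod_ne_zero_iff.mpr fun k _ => hqInt_ne (k+1) (by omega)
  -- membership helpers
  have hmemR : ∀ (i : ℕ) (x : V), x ∈ U i → R x ∈ U (i+1) := fun i x hx => hR i ⟨x, hx, rfl⟩
  have hmemL : ∀ (i : ℕ) (x : V), x ∈ U (i+1) → L x ∈ U i := fun i x hx => hL i ⟨x, hx, rfl⟩
  have hRpow : ∀ (m i : ℕ) (x : V), x ∈ U i → (R ^ m) x ∈ U (i + m) := by
    intro m
    induction m with
    | zero => intro i x hx; simpa using hx
    | succ m ih =>
      intro i x hx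
      have h2 : (R ^ (m+1)) x = (R ^ m) (R x) := by rw [pow_succ]; rfl
      rw [h2, show i + (m+1) = (i+1) + m by omega]
      exact ih (i+1) (R x) (hmemR i x hx)
  have hLpow : ∀ (m i : ℕ) (x : V), x ∈ U (i + m) → (L ^ m) x ∈ U i := by
    intro m
    induction m with
    | zero => intro i x hx; simpa using hx
    | succ m ih =>
      intro i x hx
      have h2 : (L ^ (m+1)) x = (L ^ m) (L x) := by rw [pow_succ]; rfl
      rw [h2]
      refine ih i (L x) (hmemL (i+m) x ?_)
      rwa [show (i+m)+1 = i + (m+1) by omega]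
  have hbot : ∀ (i : ℕ) (x : V), d < i → x ∈ U i → x = 0 := by
    intro i x hi hx
    rw [hUbot i hi] at hx
    simpa using hx
  -- spanning of eigenspaces of A
  have hSpanU : ∀ j, U j ≤ ⨆ i : ℕ, Module.End.eigenspace A (q ^ (2 * (i:ℤ) - d)) := by
    have key : ∀ n j, d < j + n →
        U j ≤ ⨆ i : ℕ, Module.End.eigenspace A (q ^ (2 * (i:ℤ) - d)) := by
      intro n
      induction n with
      | zero =>
        intro j hj x hx
        rw [hbot j x (by omega) hx]
        exact Submodule.zero_mem _
      | succ n ih =>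
        intro j hj x hx
        by_cases hjd : d < j
        · rw [hbot j x hjd hx]; exact Submodule.zero_mem _
        push_neg at hjd
        have hrel : ∀ m, m ≤ d - j →
            A ((R ^ m) x) = (R ^ (m+1)) x
              + (fun m => q ^ (2 * ((j+m : ℕ):ℤ) - (d:ℤ))) m • (R ^ m) x := by
          intro m _
          have hx' : (R ^ m) x ∈ U (j + m) := hRpow m j x hx
          rw [hA (j+m) _ hx', pow_succ']
          rfl
        have htop : (R ^ ((d-j)+1)) x = 0 :=
          hbot _ _ (by omega) (hRpow ((d-j)+1) j x hx)
        have hne : ∀ m, 1 ≤ m → m ≤ d - j →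
            (fun m => q ^ (2 * ((j+m : ℕ):ℤ) - (d:ℤ))) 0
              - (fun m => q ^ (2 * ((j+m : ℕ):ℤ) - (d:ℤ))) m ≠ 0 := by
          intro m hm _
          exact hzne _ _ (by push_cast; omega)
        have hveig := eigvec_aux A R (fun m => q ^ (2 * ((j+m : ℕ):ℤ) - (d:ℤ))) x (d-j)
          hrel htop hne
        have hvmem : (∑ m ∈ Finset.range ((d-j)+1),
            (∏ k ∈ Finset.range m,
              (q ^ (2 * ((j+0 : ℕ):ℤ) - (d:ℤ)) - q ^ (2 * ((j+(k+1) : ℕ):ℤ) - (d:ℤ)))⁻¹)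
              • (R ^ m) x)
            ∈ ⨆ i : ℕ, Module.End.eigenspace A (q ^ (2 * (i:ℤ) - d)) := by
          refine Submodule.mem_iSup_of_mem j ?_
          exact Module.End.mem_eigenspace_iff.mpr hveig
        have hsplit : (∑ m ∈ Finset.range ((d-j)+1),
            (∏ k ∈ Finset.range m,
              (q ^ (2 * ((j+0 : ℕ):ℤ) - (d:ℤ)) - q ^ (2 * ((j+(k+1) : ℕ):ℤ) - (d:ℤ)))⁻¹)
              • (R ^ m) x)
            = (∑ m ∈ Finset.range (d-j),
            (∏ k ∈ Finset.range (m+1),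
              (q ^ (2 * ((j+0 : ℕ):ℤ) - (d:ℤ)) - q ^ (2 * ((j+(k+1) : ℕ):ℤ) - (d:ℤ)))⁻¹)
              • (R ^ (m+1)) x) + x := by
          rw [Finset.sum_range_succ']
          simp
        have hx2 : x = (∑ m ∈ Finset.range ((d-j)+1),
            (∏ k ∈ Finset.range m,
              (q ^ (2 * ((j+0 : ℕ):ℤ) - (d:ℤ)) - q ^ (2 * ((j+(k+1) : ℕ):ℤ) - (d:ℤ)))⁻¹)
              • (R ^ m) x)
            - (∑ m ∈ Finset.range (d-j),
            (∏ k ∈ Finset.range (m+1),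
              (q ^ (2 * ((j+0 : ℕ):ℤ) - (d:ℤ)) - q ^ (2 * ((j+(k+1) : ℕ):ℤ) - (d:ℤ)))⁻¹)
              • (R ^ (m+1)) x) := by
          rw [hsplit]; abel
        rw [hx2]
        refine Submodule.sub_mem _ hvmem (Submodule.sum_mem _ fun m _ => ?_)
        refine Submodule.smul_mem _ _ ?_
        exact ih (j+(m+1)) (by omega) (hRpow (m+1) j x hx)
    intro j
    exact key (d+1) j (by omega)
  have hSpanA : (⨆ i : ℕ, Module.End.eigenspace A (q ^ (2 * (i:ℤ) - d))) = ⊤ := by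
    rw [eq_top_iff, ← hUsup]
    exact iSup_le hSpanU
  -- spanning of eigenspaces of As
  have hSpanUs : ∀ j, U j ≤ ⨆ i : ℕ, Module.End.eigenspace As (q ^ ((d:ℤ) - 2 * (i:ℤ))) := by
    intro j
    induction j using Nat.strong_induction_on with
    | _ j ih =>
      intro x hx
      have hrel : ∀ m, m ≤ j →
          As ((L ^ m) x) = (L ^ (m+1)) x
            + (fun m => q ^ ((d:ℤ) - 2 * ((j-m : ℕ):ℤ))) m • (L ^ m) x := by
        intro m hm
        have hx' : (L ^ m) x ∈ U (j - m) := by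
          refine hLpow m (j-m) x ?_
          rwa [show (j-m) + m = j by omega]
        rw [hAs (j-m) _ hx', pow_succ']
        rfl
      have htop : (L ^ (j+1)) x = 0 := by
        have h0 : (L ^ j) x ∈ U 0 := by
          refine hLpow j 0 x ?_
          rwa [Nat.zero_add]
        have h2 : (L ^ (j+1)) x = L ((L ^ j) x) := by rw [pow_succ']; rfl
        rw [h2, hL0 _ h0]
      have hne : ∀ m, 1 ≤ m → m ≤ j →
          (fun m => q ^ ((d:ℤ) - 2 * ((j-m : ℕ):ℤ))) 0
            - (fun m => q ^ ((d:ℤ) - 2 * ((j-m : ℕ):ℤ))) m ≠ 0 := by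
        intro m hm hmj
        exact hzne _ _ (by push_cast [Nat.sub_zero]; omega)
      have hveig := eigvec_aux As L (fun m => q ^ ((d:ℤ) - 2 * ((j-m : ℕ):ℤ))) x j
        hrel htop hne
      have hvmem : (∑ m ∈ Finset.range (j+1),
          (∏ k ∈ Finset.range m,
            (q ^ ((d:ℤ) - 2 * ((j-0 : ℕ):ℤ)) - q ^ ((d:ℤ) - 2 * ((j-(k+1) : ℕ):ℤ)))⁻¹)
            • (L ^ m) x)
          ∈ ⨆ i : ℕ, Module.End.eigenspace As (q ^ ((d:ℤ) - 2 * (i:ℤ))) := by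
        refine Submodule.mem_iSup_of_mem j ?_
        exact Module.End.mem_eigenspace_iff.mpr hveig
      have hx2 : x = (∑ m ∈ Finset.range (j+1),
          (∏ k ∈ Finset.range m,
            (q ^ ((d:ℤ) - 2 * ((j-0 : ℕ):ℤ)) - q ^ ((d:ℤ) - 2 * ((j-(k+1) : ℕ):ℤ)))⁻¹)
            • (L ^ m) x)
          - (∑ m ∈ Finset.range j,
          (∏ k ∈ Finset.range (m+1),
            (q ^ ((d:ℤ) - 2 * ((j-0 : ℕ):ℤ)) - q ^ ((d:ℤ) - 2 * ((j-(k+1) : ℕ):ℤ)))⁻¹)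
            • (L ^ (m+1)) x) := by
        rw [Finset.sum_range_succ']
        simp
      rw [hx2]
      refine Submodule.sub_mem _ hvmem (Submodule.sum_mem _ fun m hm => ?_)
      refine Submodule.smul_mem _ _ ?_
      have hmj : m < j := Finset.mem_range.mp hm
      refine ih (j-(m+1)) (by omega) ?_
      refine hLpow (m+1) (j-(m+1)) x ?_
      rwa [show (j-(m+1)) + (m+1) = j by omega]
  have hSpanAs : (⨆ i : ℕ, Module.End.eigenspace As (q ^ ((d:ℤ) - 2 * (i:ℤ)))) = ⊤ := by
    rw [eq_top_iff, ← hUsup]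
    exact iSup_le hSpanUs
  -- commuting of projections with A, As
  have hEcomm : ∀ x : V, E 0 (A x) = q ^ (2 * ((0:ℕ):ℤ) - (d:ℤ)) • E 0 x := by
    intro x
    have hx : x ∈ ⨆ i : ℕ, Module.End.eigenspace A (q ^ (2 * (i:ℤ) - d)) := by
      rw [hSpanA]; trivial
    refine Submodule.iSup_induction (motive := fun y => E 0 (A y) = q ^ (2 * ((0:ℕ):ℤ) - (d:ℤ)) • E 0 y)
      _ hx ?_ ?_ ?_
    · intro i y hy
      have hAy : A y = q ^ (2 * (i:ℤ) - d) • y := Module.End.mem_eigenspace_iff.mp hy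
      rcases eq_or_ne i 0 with rfl | hi
      · rw [hAy, map_smul]
      · rw [hAy, map_smul, (hE 0).2 i hi y hy, smul_zero, smul_zero]
    · simp
    · intro a b ha hb
      rw [map_add, map_add, map_add, ha, hb, smul_add]
  have hEscomm : ∀ x : V, Es 0 (As x) = q ^ ((d:ℤ) - 2 * ((0:ℕ):ℤ)) • Es 0 x := by
    intro x
    have hx : x ∈ ⨆ i : ℕ, Module.End.eigenspace As (q ^ ((d:ℤ) - 2 * (i:ℤ))) := by
      rw [hSpanAs]; trivial
    refine Submodule.iSup_induction
      (motive := fun y => Es 0 (As y) = q ^ ((d:ℤ) - 2 * ((0:ℕ):ℤ)) • Es 0 y) _ hx ?_ ?_ ?_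
    · intro i y hy
      have hAy : As y = q ^ ((d:ℤ) - 2 * (i:ℤ)) • y := Module.End.mem_eigenspace_iff.mp hy
      rcases eq_or_ne i 0 with rfl | hi
      · rw [hAy, map_smul]
      · rw [hAy, map_smul, (hEs 0).2 i hi y hy, smul_zero, smul_zero]
    · simp
    · intro a b ha hb
      rw [map_add, map_add, map_add, ha, hb, smul_add]
  -- E 0 kills R^m u for m ≥ 1
  have hRu : ∀ m : ℕ, (R ^ m) u ∈ U m := by
    intro m
    have := hRpow m 0 u hu
    rwa [Nat.zero_add] at this
  have hERstep : ∀ m : ℕ, E 0 ((R ^ (m+1)) u)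
      = (q ^ (2 * ((0:ℕ):ℤ) - (d:ℤ)) - q ^ (2 * (m:ℤ) - (d:ℤ))) • E 0 ((R ^ m) u) := by
    intro m
    have h1 := hEcomm ((R ^ m) u)
    rw [hA m _ (hRu m), map_add, map_smul] at h1
    have h2 : R ((R ^ m) u) = (R ^ (m+1)) u := by rw [pow_succ']; rfl
    rw [h2] at h1
    rw [sub_smul]
    exact eq_sub_of_add_eq h1
  have hER0 : ∀ m : ℕ, 1 ≤ m → E 0 ((R ^ m) u) = 0 := by
    intro m hm
    induction m with
    | zero => omega
    | succ m ih =>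
      rcases Nat.eq_zero_or_pos m with rfl | hm'
      · rw [hERstep 0]
        norm_num
      · rw [hERstep m, ih hm', smul_zero]
  -- formula for E 0 u
  have hrelA : ∀ m, m ≤ d →
      A ((R ^ m) u) = (R ^ (m+1)) u
        + (fun m => q ^ (2 * ((m:ℕ):ℤ) - (d:ℤ))) m • (R ^ m) u := by
    intro m _
    rw [hA m _ (hRu m), pow_succ']
    rfl
  have htopA : (R ^ (d+1)) u = 0 := hbot _ _ (by omega) (hRu (d+1))
  have hneA : ∀ m, 1 ≤ m → m ≤ d →
      (fun m => q ^ (2 * ((m:ℕ):ℤ) - (d:ℤ))) 0 - (fun m => q ^ (2 * ((m:ℕ):ℤ) - (d:ℤ))) m ≠ 0 := by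
    intro m hm _
    exact hzne _ _ (by push_cast; omega)
  have hveigA := eigvec_aux A R (fun m => q ^ (2 * ((m:ℕ):ℤ) - (d:ℤ))) u d hrelA htopA hneA
  have hvmemA : (∑ m ∈ Finset.range (d+1),
      (∏ k ∈ Finset.range m,
        (q ^ (2 * ((0:ℕ):ℤ) - (d:ℤ)) - q ^ (2 * ((k+1 : ℕ):ℤ) - (d:ℤ)))⁻¹) • (R ^ m) u)
      ∈ Module.End.eigenspace A (q ^ (2 * ((0:ℕ):ℤ) - (d:ℤ))) :=
    Module.End.mem_eigenspace_iff.mpr hveigA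
  have hE0v := (hE 0).1 _ hvmemA
  have hE0u : E 0 u = ∑ m ∈ Finset.range (d+1),
      (∏ k ∈ Finset.range m,
        (q ^ (2 * ((0:ℕ):ℤ) - (d:ℤ)) - q ^ (2 * ((k+1 : ℕ):ℤ) - (d:ℤ)))⁻¹) • (R ^ m) u := by
    have h3 : E 0 (∑ m ∈ Finset.range (d+1),
        (∏ k ∈ Finset.range m,
          (q ^ (2 * ((0:ℕ):ℤ) - (d:ℤ)) - q ^ (2 * ((k+1 : ℕ):ℤ) - (d:ℤ)))⁻¹) • (R ^ m) u)
        = E 0 u := by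
      rw [map_sum, Finset.sum_range_succ']
      simp only [map_smul]
      have hz : ∀ m ∈ Finset.range d,
          (∏ k ∈ Finset.range (m+1),
            (q ^ (2 * ((0:ℕ):ℤ) - (d:ℤ)) - q ^ (2 * ((k+1 : ℕ):ℤ) - (d:ℤ)))⁻¹)
            • E 0 ((R ^ (m+1)) u) = 0 := by
        intro m _
        rw [hER0 (m+1) (by omega), smul_zero]
      rw [Finset.sum_congr rfl hz, Finset.sum_const_zero, zero_add]
      simp
    rw [← h3, hE0v]
  -- Es 0 fixes u
  have hEsu : Es 0 u = u := by
    refine (hEs 0).1 u (Module.End.mem_eigenspace_iff.mpr ?_)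
    rw [hAs 0 u hu, hL0 u hu, zero_add]
  -- Es 0 on L-chains
  have hEsL : ∀ (i : ℕ) (x : V), x ∈ U (i+1) →
      Es 0 (L x) = (q ^ ((d:ℤ) - 2 * ((0:ℕ):ℤ)) - q ^ ((d:ℤ) - 2 * ((i+1 : ℕ):ℤ))) • Es 0 x := by
    intro i x hx
    have h1 := hEscomm x
    rw [hAs (i+1) x hx, map_add, map_smul] at h1
    rw [sub_smul]
    exact eq_sub_of_add_eq h1
  have hEsLm : ∀ (m : ℕ) (x : V), x ∈ U m →
      Es 0 ((L ^ m) x)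
        = (∏ k ∈ Finset.range m,
            (q ^ ((d:ℤ) - 2 * ((0:ℕ):ℤ)) - q ^ ((d:ℤ) - 2 * ((k+1 : ℕ):ℤ)))) • Es 0 x := by
    intro m
    induction m with
    | zero => intro x _; simp
    | succ m ih =>
      intro x hx
      have h2 : (L ^ (m+1)) x = (L ^ m) (L x) := by rw [pow_succ]; rfl
      rw [h2, ih (L x) (hmemL m x hx), hEsL m x hx, Finset.prod_range_succ, smul_smul]
  -- Es 0 on R^m u
  have hEsRm : ∀ m : ℕ, m ≤ d → Es 0 ((R ^ m) u)
      = ((∏ k ∈ Finset.range m,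
          (q ^ ((d:ℤ) - 2 * ((0:ℕ):ℤ)) - q ^ ((d:ℤ) - 2 * ((k+1 : ℕ):ℤ))))⁻¹ * σ m) • u := by
    intro m hm
    have h1 := hEsLm m _ (hRu m)
    have h2 : (L ^ m) ((R ^ m) u) = σ m • u := by
      rw [← Module.End.mul_apply]
      exact hσ m hm
    rw [h2, map_smul, hEsu] at h1
    have hPi : (∏ k ∈ Finset.range m,
        (q ^ ((d:ℤ) - 2 * ((0:ℕ):ℤ)) - q ^ ((d:ℤ) - 2 * ((k+1 : ℕ):ℤ)))) ≠ 0 :=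
      Finset.prod_ne_zero_iff.mpr fun k _ => hzne _ _ (by push_cast; omega)
    rw [← smul_smul, h1, smul_smul, inv_mul_cancel₀ hPi, one_smul]
  -- final assembly
  rw [hE0u, map_sum]
  simp only [map_smul]
  rw [Finset.sum_smul]
  refine Finset.sum_congr rfl fun m hm => ?_
  have hmd : m ≤ d := by
    have := Finset.mem_range.mp hm; omega
  rw [hEsRm m hmd, smul_smul]
  congr 1
  -- scalar identity
  have hprod : (∏ k ∈ Finset.range m,
        (q ^ (2 * ((0:ℕ):ℤ) - (d:ℤ)) - q ^ (2 * ((k+1 : ℕ):ℤ) - (d:ℤ))))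
      * (∏ k ∈ Finset.range m,
        (q ^ ((d:ℤ) - 2 * ((0:ℕ):ℤ)) - q ^ ((d:ℤ) - 2 * ((k+1 : ℕ):ℤ))))
      = (-1:K)^m * (qFac q m)^2 * (((q - q⁻¹)^2)^m) := by
    rw [← Finset.prod_mul_distrib,
      Finset.prod_congr rfl (fun k _ => key_k q hq hq2 d (k+1)),
      Finset.prod_mul_distrib, Finset.prod_const, Finset.card_range]
    congr 1
    calc ∏ k ∈ Finset.range m, -(qInt q (k+1))^2
        = ∏ k ∈ Finset.range m, ((-1) * (qInt q (k+1))^2) :=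
          Finset.prod_congr rfl (fun k _ => by ring)
      _ = (-1:K)^m * ∏ k ∈ Finset.range m, (qInt q (k+1))^2 := by
          rw [Finset.prod_mul_distrib, Finset.prod_const, Finset.card_range]
      _ = (-1:K)^m * (qFac q m)^2 := by rw [Finset.prod_pow, qFac]
  rw [Finset.prod_inv_distrib]
  have hrew : (∏ k ∈ Finset.range m,
        (q ^ (2 * ((0:ℕ):ℤ) - (d:ℤ)) - q ^ (2 * ((k+1 : ℕ):ℤ) - (d:ℤ))))⁻¹
      * ((∏ k ∈ Finset.range m,
        (q ^ ((d:ℤ) - 2 * ((0:ℕ):ℤ)) - q ^ ((d:ℤ) - 2 * ((k+1 : ℕ):ℤ))))⁻¹ * σ m)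
      = ((∏ k ∈ Finset.range m,
        (q ^ (2 * ((0:ℕ):ℤ) - (d:ℤ)) - q ^ (2 * ((k+1 : ℕ):ℤ) - (d:ℤ))))
      * (∏ k ∈ Finset.range m,
        (q ^ ((d:ℤ) - 2 * ((0:ℕ):ℤ)) - q ^ ((d:ℤ) - 2 * ((k+1 : ℕ):ℤ)))))⁻¹ * σ m := by
    rw [mul_inv]; ring
  rw [hrew, hprod]
  set a := qFac q m with ha
  set W := ((q - q⁻¹)^2 : K) with hWdef
  have hneginv : ((-1:K)^m)⁻¹ = (-1:K)^m := by rw [← inv_pow, inv_neg, inv_one]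
  have h2 : q^m * (q^m)⁻¹ = (1:K) := mul_inv_cancel₀ (pow_ne_zero m hq)
  rw [mul_inv, mul_inv, hneginv, div_eq_mul_inv, mul_pow, inv_pow q m, inv_pow W m]
  linear_combination (-((-1:K)^m * σ m * ((W^m)⁻¹ * (a^2)⁻¹))) * h2
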